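/- In the zonotope setting, let i, t ∈ I with i ≠ t. If σ_i = −σ_t and σ_i ≠ 0, then the regions Z_B^i and Z_A^t are disjoint: Z_B^i ∩ Z_A^t = ∅. -/

import Mathlib

open scoped Classical

noncomputable section

/-- The family of `k + 1` vectors `w¹, …, w^k, w^j` indexed by `I = {1,…,k} ∪ {j}`,
realized as `Option (Fin k)` with `none` playing the role of the extra index `j`. -/
def vecs {k : ℕ} (w : Fin k → (Fin k → ℝ)) (wj : Fin k → ℝ) :
    Option (Fin k) → (Fin k → ℝ) :=
  fun o => o.elim wj w

/-- The signs `σ_i` for `i ∈ I`: for `i ∈ {1,…,k}`,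
`σ_i = sign(det W_{[i→j]} / det [w¹ ⋯ w^k])` where `W_{[i→j]}` is `[w¹ ⋯ w^k]` with
its `i`-th column replaced by `w^j`; and `σ_j = −1`. -/
def sigOf {k : ℕ} (w : Fin k → (Fin k → ℝ)) (wj : Fin k → ℝ) : Option (Fin k) → ℝ :=
  fun o => o.elim (-1) fun i =>
    Real.sign ((Matrix.of fun a l => if l = i then wj a else w l a).det /
      (Matrix.of fun a l => w l a).det)

/-- The open parallelotope `Z_A^i = {∑_{r ∈ I ∖ {i}} λ_r w^r : λ_r ∈ (0,1)}`
if the `k` vectors `{w^r}_{r ∈ I ∖ {i}}` are linearly independent, and `∅`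
otherwise. -/
def ZA {k : ℕ} (w : Fin k → (Fin k → ℝ)) (wj : Fin k → ℝ) (i : Option (Fin k)) :
    Set (Fin k → ℝ) :=
  if LinearIndependent ℝ (fun r : {r : Option (Fin k) // r ≠ i} => vecs w wj r.1) then
    {x | ∃ lam : Option (Fin k) → ℝ,
      (∀ r : Option (Fin k), r ≠ i → lam r ∈ Set.Ioo (0 : ℝ) 1) ∧
      x = ∑ r ∈ Finset.univ.erase i, lam r • vecs w wj r}
  else ∅

/-- The translated open parallelotope `Z_B^i = w^i + Z_A^i`. -/
def ZB {k : ℕ} (w : Fin k → (Fin k → ℝ)) (wj : Fin k → ℝ) (i : Option (Fin k)) :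
    Set (Fin k → ℝ) :=
  (fun y => vecs w wj i + y) '' ZA w wj i

end

open scoped Classical in
lemma mem_ZA_elim {k : ℕ} {w : Fin k → (Fin k → ℝ)} {wj : Fin k → ℝ}
    {i : Option (Fin k)} {x : Fin k → ℝ} (h : x ∈ ZA w wj i) :
    ∃ lam : Option (Fin k) → ℝ,
      (∀ r : Option (Fin k), r ≠ i → lam r ∈ Set.Ioo (0 : ℝ) 1) ∧
      x = ∑ r ∈ Finset.univ.erase i, lam r • vecs w wj r := by
  unfold ZA at h
  split at h
  · exact h
  · exact absurd h (Set.notMem_empty x)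

/-- If `i ≠ t` in `I`, `σ_i = −σ_t` and `σ_i ≠ 0`, then the regions `Z_B^i` and
`Z_A^t` are disjoint. -/
theorem ZB_ZA_disjoint_of_opposite_signs (k : ℕ) (hk : 1 ≤ k)
    (w : Fin k → (Fin k → ℝ)) (wj : Fin k → ℝ)
    (hdet : (Matrix.of fun a l => w l a).det ≠ 0)
    (i t : Option (Fin k)) (hit : i ≠ t)
    (hsig : sigOf w wj i = - sigOf w wj t) (hne : sigOf w wj i ≠ 0) :
    ZB w wj i ∩ ZA w wj t = ∅ := by
  classical
  set M : Matrix (Fin k) (Fin k) ℝ := Matrix.of fun a l => w l a with hM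
  -- Cramer coefficients: wj = ∑ c l • w l
  set c : Fin k → ℝ := fun l => (M.updateCol l wj).det / M.det with hc
  have hwj : (∑ l, c l • w l) = wj := by
    have hcv : c = M.det⁻¹ • Matrix.cramer M wj := by
      funext l
      simp [hc, Matrix.cramer_apply, div_eq_inv_mul]
    have hmv : M.mulVec c = wj := by
      rw [hcv, Matrix.mulVec_smul, Matrix.mulVec_cramer, smul_smul,
        inv_mul_cancel₀ hdet, one_smul]
    funext a
    have := congrFun hmv a
    rw [← this]
    simp only [Matrix.mulVec, dotProduct, Finset.sum_apply, Pi.smul_apply,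
      smul_eq_mul]
    exact Finset.sum_congr rfl fun l _ => by simp [hM, mul_comm]
  -- the extended coefficient vector
  set C : Option (Fin k) → ℝ := fun o => o.elim (-1) c with hC
  -- signs are signs of C
  have hsC : ∀ o, sigOf w wj o = Real.sign (C o) := by
    intro o
    cases o with
    | none =>
      simp [sigOf, hC, Real.sign_of_neg (by norm_num : (-1 : ℝ) < 0)]
    | some r =>
      have hupd : (Matrix.of fun a l => if l = r then wj a else w l a) =
          M.updateCol r wj := by
        ext a l
        simp [Matrix.updateCol_apply, hM]
      simp [sigOf, hC, hc, hupd, ← hM]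
  -- transform hypothesis
  ext x
  simp only [Set.mem_inter_iff, Set.mem_empty_iff_false, iff_false]
  rintro ⟨⟨y, hyA, hxy⟩, hxA⟩
  obtain ⟨lam, hlam, hy⟩ := mem_ZA_elim hyA
  obtain ⟨mu, hmu, hx⟩ := mem_ZA_elim hxA
  -- full-sum representations
  have hxi : x = ∑ r : Option (Fin k),
      (if r = i then (1 : ℝ) else lam r) • vecs w wj r := by
    rw [← Finset.add_sum_erase _ _ (Finset.mem_univ i), if_pos rfl, one_smul,
      ← hxy, hy]
    dsimp only
    congr 1
    exact Finset.sum_congr rfl fun r hr => by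
      rw [if_neg (Finset.ne_of_mem_erase hr)]
  have hxt : x = ∑ r : Option (Fin k),
      (if r = t then (0 : ℝ) else mu r) • vecs w wj r := by
    rw [← Finset.add_sum_erase _ _ (Finset.mem_univ t), if_pos rfl, zero_smul,
      zero_add, hx]
    exact Finset.sum_congr rfl fun r hr => by
      rw [if_neg (Finset.ne_of_mem_erase hr)]
  set D : Option (Fin k) → ℝ := fun r =>
    (if r = i then (1 : ℝ) else lam r) - (if r = t then (0 : ℝ) else mu r) with hD
  have h0 : ∑ r : Option (Fin k), D r • vecs w wj r = 0 := by
    have h := sub_eq_zero.mpr (hxi.symm.trans hxt)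
    rw [← Finset.sum_sub_distrib] at h
    rw [← h]
    exact Finset.sum_congr rfl fun r _ => by rw [hD, sub_smul]
  -- split the Option sum and substitute wj
  rw [Fintype.sum_option] at h0
  have hnone : vecs w wj none = wj := rfl
  rw [hnone, ← hwj, Finset.smul_sum] at h0
  have h0' : ∑ l : Fin k, (D none * c l + D (some l)) • w l = 0 := by
    rw [← h0, ← Finset.sum_add_distrib]
    exact Finset.sum_congr rfl fun l _ => by
      rw [add_smul, smul_smul]
      rfl
  -- deduce coefficients vanish
  set e : Fin k → ℝ := fun l => D none * c l + D (some l) with he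
  have hMe : M.mulVec e = 0 := by
    funext a
    have := congrFun h0' a
    simp only [Finset.sum_apply, Pi.smul_apply, smul_eq_mul, Pi.zero_apply] at this ⊢
    rw [Matrix.mulVec, dotProduct, ← this]
    exact Finset.sum_congr rfl fun l _ => by simp [hM, he, mul_comm]
  have he0 : e = 0 := Matrix.eq_zero_of_mulVec_eq_zero hdet hMe
  -- so D r = -(D none) * C r for all r
  have hDC : ∀ r, D r = -(D none) * C r := by
    intro r
    cases r with
    | none => simp [hC]
    | some l =>
      have := congrFun he0 l
      simp only [he, Pi.zero_apply] at this
      have : D (some l) = -(D none) * c l := by linarith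
      simpa [hC] using this
  -- positivity of D i and D t
  have hDi : 0 < D i := by
    have hmui := hmu i hit
    have : D i = 1 - mu i := by simp [hD, hit]
    rw [this]
    linarith [hmui.2]
  have hDt : 0 < D t := by
    have hlamt := hlam t (Ne.symm hit)
    have : D t = lam t := by simp [hD, Ne.symm hit]
    rw [this]
    linarith [hlamt.1]
  rw [hDC i] at hDi
  rw [hDC t] at hDt
  rw [hsC i] at hne
  rw [hsC i, hsC t] at hsig
  rcases mul_pos_iff.mp hDi with ⟨hs, hCi⟩ | ⟨hs, hCi⟩ <;>
    rcases mul_pos_iff.mp hDt with ⟨hs', hCt⟩ | ⟨hs', hCt⟩ <;>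
    try linarith
  · rw [Real.sign_of_pos hCi, Real.sign_of_pos hCt] at hsig; norm_num at hsig
  · rw [Real.sign_of_neg hCi, Real.sign_of_neg hCt] at hsig; norm_num at hsig
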